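/- For real numbers a > s > 0, the inequality e^{a-s}(s/a)^a ≤ exp(-(a-s)²/(2a)) holds. -/

import Mathlib

lemma log_one_sub_le (x : ℝ) (h0 : 0 ≤ x) (h1 : x < 1) :
    Real.log (1 - x) ≤ -x - x ^ 2 / 2 := by
  set f : ℝ → ℝ := fun y => -Real.log (1 - y) - y - y ^ 2 / 2 with hf
  have hderiv : ∀ y ∈ Set.Ioo (0:ℝ) 1, HasDerivAt f (1 / (1 - y) - 1 - y) y := by
    intro y hy
    have hne : (1 - y) ≠ 0 := by nlinarith [hy.2]
    have h1' : HasDerivAt (fun y : ℝ => 1 - y) (-1) y := by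
      simpa using (hasDerivAt_id y).const_sub 1
    have hlog : HasDerivAt (fun y : ℝ => Real.log (1 - y)) ((1 - y)⁻¹ * (-1)) y :=
      (Real.hasDerivAt_log hne).comp y h1'
    have h2 : HasDerivAt (fun y : ℝ => y ^ 2 / 2) y y := by
      simpa using (hasDerivAt_pow 2 y).div_const 2
    have := ((hlog.neg.sub (hasDerivAt_id y)).sub h2)
    convert this using 1 <;> first | rfl | ring
  have hcont : ContinuousOn f (Set.Ico 0 1) := by
    apply ContinuousOn.sub
    apply ContinuousOn.sub
    · apply ContinuousOn.neg
      apply Real.continuousOn_log.comp ((continuous_const.sub continuous_id).continuousOn)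
      intro y hy
      simp only [Set.mem_compl_iff, Set.mem_singleton_iff]
      have := hy.2
      simp only [Set.mem_Ico] at hy
      intro h
      simp only [Pi.sub_apply, id] at h
      nlinarith [hy.2]
    · exact continuousOn_id
    · exact (continuous_pow 2).continuousOn.div_const 2
  have hmono : MonotoneOn f (Set.Ico 0 1) := by
    apply monotoneOn_of_deriv_nonneg (convex_Ico 0 1) hcont
    · intro y hy
      rw [interior_Ico] at hy
      exact (hderiv y hy).differentiableAt.differentiableWithinAt
    · intro y hy
      rw [interior_Ico] at hy
      rw [(hderiv y hy).deriv]
      have h1y : (0:ℝ) < 1 - y := by linarith [hy.2]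
      have h2 : 1 + y ≤ 1 / (1 - y) := by
        rw [le_div_iff₀ h1y]; nlinarith [sq_nonneg y]
      linarith
  have h0mem : (0:ℝ) ∈ Set.Ico (0:ℝ) 1 := by constructor <;> norm_num
  have hxmem : x ∈ Set.Ico (0:ℝ) 1 := ⟨h0, h1⟩
  have := hmono h0mem hxmem h0
  simp only [hf] at this
  simp at this
  linarith

theorem chernoff_exponent_bound (a s : ℝ) (hs : 0 < s) (hsa : s < a) :
    Real.exp (a - s) * (s / a) ^ a ≤ Real.exp (-(a - s) ^ 2 / (2 * a)) := by
  have ha : 0 < a := hs.trans hsa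
  have hsa' : 0 < s / a := div_pos hs ha
  rw [Real.rpow_def_of_pos hsa', ← Real.exp_add, Real.exp_le_exp]
  set x := (a - s) / a with hx
  have hx0 : 0 ≤ x := div_nonneg (by linarith) ha.le
  have hx1 : x < 1 := by rw [hx, div_lt_one ha]; linarith
  have hlog : Real.log (s / a) ≤ -x - x ^ 2 / 2 := by
    have : s / a = 1 - x := by rw [hx]; field_simp; ring
    rw [this]
    exact log_one_sub_le x hx0 hx1
  have key : a * Real.log (s / a) ≤ -(a - s) - (a - s) ^ 2 / (2 * a) := by
    have h2 := mul_le_mul_of_nonneg_left hlog (le_of_lt ha)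
    have : a * (-x - x ^ 2 / 2) = -(a - s) - (a - s) ^ 2 / (2 * a) := by
      rw [hx]; field_simp
    linarith [this ▸ h2]
  have : -(a - s) ^ 2 / (2 * a) = (a - s) + (-(a-s) - (a - s) ^ 2 / (2 * a)) := by ring
  linarith
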